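/- Let n⁻, n⁺ ≥ 1, E = ℝ^{n⁻} × ℝ^{n⁺}, and let f : E → E be an analytic diffeomorphism fixing the origin with f(x, y) = (λ⁻ ⊙ x + r⁻(x, y), λ⁺ ⊙ y + r⁺(x, y)) on a product neighborhood U = B⁻ × B⁺ of 0, where r = (r⁻, r⁺) is analytic with r(0) = 0 and Dr(0) = 0, 0 < |λ⁻_k| < 1 for all k, |λ⁺_j| > 1 for all j, and λ⁻ satisfies the multiplicative non-resonance condition. For i ≥ 1 and z = (x, y) whose iterates f^[j](z), 0 ≤ j ≤ i, stay in U, write f^[i](x, y) = ((λ⁻)^i ⊙ x + r_{−,i}(x, y), (λ⁺)^i ⊙ y + r_{+,i}(x, y)). Let x⁻ ∈ B⁻, let δ ∈ (0, 1)^{n⁺} satisfy the multiplicative non-resonance condition, and let C ∈ ℝ^{n⁺} be admissible. Assume that for every sufficiently large n, setting Y₊ = δ^n ⊙ C, there exist points (x_i, y_i) ∈ W⁺(0) ∩ U (for all sufficiently large i) whose iterates up to time i stay in U, such that the second component of f^[i](x_i, y_i) equals Y₊, x_i → x⁻ as i → ∞, and the sequence (λ⁻)^{−i} ⊙ r_{−,i}(x_i,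 y_i) converges as i → ∞ to a limit l₊(Y₊) ∈ ℝ^{n⁻} for which x⁻ + l₊(Y₊) is admissible (all coordinates nonzero). Then every analytic function I : E → ℝ with I ∘ f = I is constant on a neighborhood of 0. -/

import Mathlib

open Filter Topology
open scoped ENNReal NNReal

/-- Multi-index degree-bounded sets are finite. -/
lemma AuxNonint.finite_deg_le {κ : Type*} [Fintype κ] (D : ℕ) :
    {α : κ → ℕ | ∀ k, α k ≤ D}.Finite := by
  have : {α : κ → ℕ | ∀ k, α k ≤ D} ⊆
      Set.pi Set.univ (fun _ : κ => Set.Iic D) := by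
    intro α hα k _; exact hα k
  exact (Set.Finite.pi (fun _ => Set.finite_Iic D)).subset this

/-- **Core Dirichlet-type vanishing lemma.** -/
theorem AuxNonint.core_vanish {κ : Type*} [Fintype κ] [Nonempty κ]
    (lam : κ → ℝ) (hlam : ∀ k, 0 < |lam k| ∧ |lam k| < 1)
    (hres : ∀ ν : κ → ℤ, ν ≠ 0 → |∏ k, lam k ^ ν k| ≠ 1)
    (A : (κ → ℕ) → ℝ) (W : ℕ → κ → ℝ) (X : κ → ℝ)
    (hW : Tendsto W atTop (𝓝 X)) (hX : ∀ k, X k ≠ 0)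
    (ρ : ℝ) (hρ : 0 < ρ)
    (hsum : Summable fun α : κ → ℕ => |A α| * ρ ^ (∑ s, α s))
    (hzero : ∀ᶠ i in (atTop : Filter ℕ),
      HasSum (fun α : κ → ℕ => A α * ∏ k, (lam k ^ i * W i k) ^ α k) 0) :
    ∀ α, A α = 0 := by
  intro α₀
  by_contra hA0
  classical
  have hlamne : ∀ k, lam k ≠ 0 := fun k => abs_pos.mp (hlam k).1
  set rate : (κ → ℕ) → ℝ := fun α => ∏ k, |lam k| ^ α k with hrate
  have rate_pos : ∀ α, 0 < rate α := fun α =>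
    Finset.prod_pos fun k _ => pow_pos (hlam k).1 _
  -- maximal modulus M < 1
  obtain ⟨M, hM1, hMle⟩ : ∃ M, M < 1 ∧ ∀ k, |lam k| ≤ M := by
    obtain ⟨k0, -, hk0⟩ := Finset.exists_max_image Finset.univ (fun k => |lam k|)
      Finset.univ_nonempty
    exact ⟨|lam k0|, (hlam k0).2, fun k => hk0 k (Finset.mem_univ k)⟩
  have hM0 : 0 < M := lt_of_lt_of_le (hlam (Classical.arbitrary κ)).1 (hMle _)
  have rate_le : ∀ α, rate α ≤ M ^ (∑ s, α s) := by
    intro α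
    rw [← Finset.prod_pow_eq_pow_sum]
    exact Finset.prod_le_prod (fun k _ => pow_nonneg (abs_nonneg _) _)
      (fun k _ => pow_le_pow_left₀ (abs_nonneg _) (hMle k) _)
  -- distinct rates
  have rate_inj : ∀ α β : κ → ℕ, rate α = rate β → α = β := by
    intro α β h
    by_contra hne
    have hν : (fun k => (α k : ℤ) - β k) ≠ 0 := by
      intro h0
      apply hne
      funext k
      have := congrFun h0 k
      simpa [sub_eq_zero] using this
    apply hres _ hν
    have : ∀ k, |lam k ^ ((α k : ℤ) - β k)| = |lam k| ^ α k / |lam k| ^ β k := by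
      intro k
      rw [zpow_sub₀ (hlamne k), zpow_natCast, zpow_natCast, abs_div, abs_pow, abs_pow]
    rw [Finset.abs_prod, Finset.prod_congr rfl (fun k _ => this k), Finset.prod_div_distrib]
    rw [show (∏ k, |lam k| ^ α k) = rate α from rfl, show (∏ k, |lam k| ^ β k) = rate β from rfl,
      h, div_self (rate_pos β).ne']
  -- the set of large-rate indices with nonzero coefficient is finite
  set S' : Set (κ → ℕ) := {α | A α ≠ 0 ∧ rate α₀ ≤ rate α} with hS'
  have hS'fin : S'.Finite := by
    obtain ⟨D, hD⟩ := exists_pow_lt_of_lt_one (rate_pos α₀) hM1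
    refine (AuxNonint.finite_deg_le D).subset ?_
    intro α hα k
    by_contra hk
    push_neg at hk
    have h1 : rate α ≤ M ^ (∑ s, α s) := rate_le α
    have h2 : M ^ (∑ s, α s) ≤ M ^ D := by
      apply pow_le_pow_of_le_one hM0.le hM1.le
      calc D ≤ α k := hk.le
        _ ≤ ∑ s, α s := Finset.single_le_sum (fun s _ => Nat.zero_le _) (Finset.mem_univ k)
    have := hα.2
    nlinarith [hD]
  have hS'ne : S'.Nonempty := ⟨α₀, hA0, le_refl _⟩
  obtain ⟨αs, hαsS, hαsmax⟩ := Set.exists_max_image S' rate hS'fin hS'ne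
  have hmax : ∀ β, A β ≠ 0 → rate β ≤ rate αs := by
    intro β hβ
    by_cases h : rate α₀ ≤ rate β
    · exact hαsmax β ⟨hβ, h⟩
    · push_neg at h
      exact le_trans h.le (le_trans hαsS.2 (le_refl _))
  have hstrict : ∀ β, A β ≠ 0 → β ≠ αs → rate β < rate αs := fun β hβ hne =>
    lt_of_le_of_ne (hmax β hβ) (fun h => hne (rate_inj _ _ h))
  -- abbreviations
  set Pc : ℝ := ∏ k, X k ^ αs k with hPc
  have hPcne : Pc ≠ 0 := Finset.prod_ne_zero_iff.mpr fun k _ => pow_ne_zero _ (hX k)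
  set Ls : ℝ := ∏ k, lam k ^ αs k with hLs
  have hLsne : Ls ≠ 0 := Finset.prod_ne_zero_iff.mpr fun k _ => pow_ne_zero _ (hlamne k)
  have habsLs : |Ls| = rate αs := by
    rw [hLs, Finset.abs_prod]
    exact Finset.prod_congr rfl fun k _ => abs_pow _ _
  set q : (κ → ℕ) → ℝ := fun α => (∏ k, lam k ^ α k) * Ls⁻¹ with hq
  have habsq : ∀ α, |q α| = rate α / rate αs := by
    intro α
    rw [hq, abs_mul, abs_inv, habsLs, div_eq_mul_inv]
    congr 1
    rw [Finset.abs_prod]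
    exact Finset.prod_congr rfl fun k _ => abs_pow _ _
  set U : ℕ → (κ → ℕ) → ℝ :=
    fun i α => (A α * ∏ k, (lam k ^ i * W i k) ^ α k) * (Ls ^ i)⁻¹ with hU
  have hU0 : ∀ᶠ i in (atTop : Filter ℕ), HasSum (U i) 0 := by
    filter_upwards [hzero] with i h
    simpa using h.mul_right ((Ls ^ i)⁻¹)
  have hUeq : ∀ i α, U i α = (A α * ∏ k, W i k ^ α k) * q α ^ i := by
    intro i α
    have h1 : ∏ k, (lam k ^ i * W i k) ^ α k
        = (∏ k, lam k ^ α k) ^ i * ∏ k, W i k ^ α k := by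
      rw [← Finset.prod_pow, ← Finset.prod_mul_distrib]
      refine Finset.prod_congr rfl fun k _ => ?_
      rw [mul_pow, ← pow_mul, ← pow_mul, mul_comm (α k) i]
    show (A α * ∏ k, (lam k ^ i * W i k) ^ α k) * (Ls ^ i)⁻¹ = _
    rw [h1, show q α = (∏ k, lam k ^ α k) * Ls⁻¹ from rfl, mul_pow, inv_pow]
    ring
  -- pointwise limits
  have hWk : ∀ k, Tendsto (fun i => W i k) atTop (𝓝 (X k)) := fun k => tendsto_pi_nhds.mp hW k
  have hProdW : ∀ α : κ → ℕ,
      Tendsto (fun i => ∏ k, W i k ^ α k) atTop (𝓝 (∏ k, X k ^ α k)) := fun α =>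
    tendsto_finset_prod _ fun k _ => (hWk k).pow (α k)
  set L : (κ → ℕ) → ℝ := fun α => if α = αs then A αs * Pc else 0 with hL
  have hpoint : ∀ α, Tendsto (fun i => U i α) atTop (𝓝 (L α)) := by
    intro α
    by_cases hα : α = αs
    · subst hα
      have hq1 : q α = 1 := mul_inv_cancel₀ hLsne
      have heq : ∀ i, U i α = A α * ∏ k, W i k ^ α k := by
        intro i; rw [hUeq, hq1, one_pow, mul_one]
      rw [hL]
      simp only [if_pos rfl]
      exact (tendsto_congr heq).mpr ((hProdW α).const_mul (A α))
    · rw [hL]; simp only [if_neg hα]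
      by_cases hA : A α = 0
      · have heq : ∀ i, U i α = 0 := fun i => by rw [hUeq, hA]; ring
        exact (tendsto_congr heq).mpr tendsto_const_nhds
      · have hqlt : |q α| < 1 := by
          rw [habsq, div_lt_one (rate_pos αs)]
          exact hstrict α hA hα
        have h2 : Tendsto (fun i : ℕ => q α ^ i) atTop (𝓝 0) :=
          tendsto_pow_atTop_nhds_zero_of_norm_lt_one (by rwa [Real.norm_eq_abs])
        have h3 := ((hProdW α).const_mul (A α)).mul h2
        rw [mul_zero] at h3
        exact (tendsto_congr fun i => hUeq i α).mpr h3
  -- choice of i2 and dominating bound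
  obtain ⟨i2, hi2⟩ : ∃ i2 : ℕ, M ^ i2 * (‖X‖ + 1) ≤ ρ := by
    have h0 : Tendsto (fun i : ℕ => M ^ i * (‖X‖ + 1)) atTop (𝓝 (0 * (‖X‖ + 1))) :=
      (tendsto_pow_atTop_nhds_zero_of_lt_one hM0.le hM1).mul_const _
    rw [zero_mul] at h0
    exact (h0.eventually (eventually_le_nhds hρ)).exists
  have hWbd : ∀ᶠ i in (atTop : Filter ℕ), ‖W i‖ ≤ ‖X‖ + 1 :=
    hW.norm.eventually (eventually_le_nhds (lt_add_one _))
  set bound : (κ → ℕ) → ℝ :=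
    fun α => |A α| * ρ ^ (∑ s, α s) * ((rate αs) ^ i2)⁻¹ with hbound
  have hboundsum : Summable bound := hsum.mul_right _
  have hdom : ∀ᶠ i in (atTop : Filter ℕ), ∀ α, ‖U i α‖ ≤ bound α := by
    filter_upwards [hWbd, eventually_ge_atTop i2] with i hWi hii2
    intro α
    have hbnonneg : 0 ≤ bound α := by
      rw [hbound]
      have := rate_pos αs
      positivity
    by_cases hA : A α = 0
    · rw [hUeq, hA]
      simpa using hbnonneg
    · rw [hUeq, Real.norm_eq_abs, abs_mul, abs_mul, abs_pow, habsq, Finset.abs_prod]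
      have f1 : ∀ k, |W i k| ≤ ‖X‖ + 1 := fun k =>
        le_trans (norm_le_pi_norm (W i) k) hWi
      set P : ℝ := ∏ k, |W i k ^ α k| with hPdef
      have hPval : P = ∏ k, |W i k| ^ α k := by
        rw [hPdef]; exact Finset.prod_congr rfl fun k _ => abs_pow _ _
      have hPnonneg : 0 ≤ P := by
        rw [hPval]; exact Finset.prod_nonneg fun k _ => pow_nonneg (abs_nonneg _) _
      set d : ℕ := ∑ s, α s with hd
      set rr : ℝ := rate αs with hrr
      set ra : ℝ := rate α with hra
      have hrrpos : 0 < rr := rate_pos αs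
      have hrapos : 0 < ra := rate_pos α
      have key : P * ra ^ i ≤ ρ ^ d * rr ^ (i - i2) := by
        have hsplit : ra ^ i = ra ^ i2 * ra ^ (i - i2) := by
          rw [← pow_add, Nat.add_sub_cancel' hii2]
        have h1 : P * ra ^ i2 ≤ ρ ^ d := by
          have heq2 : P * ra ^ i2 = ∏ k, (|W i k| * |lam k| ^ i2) ^ α k := by
            rw [hPval, hra, hrate]
            rw [← Finset.prod_pow, ← Finset.prod_mul_distrib]
            refine Finset.prod_congr rfl fun k _ => ?_
            rw [mul_pow, ← pow_mul, ← pow_mul, mul_comm (α k) i2]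
          rw [heq2, hd, ← Finset.prod_pow_eq_pow_sum]
          refine Finset.prod_le_prod
            (fun k _ => pow_nonneg (by positivity) _)
            (fun k _ => pow_le_pow_left₀ (by positivity) ?_ _)
          calc |W i k| * |lam k| ^ i2
              ≤ (‖X‖ + 1) * M ^ i2 := by
                refine mul_le_mul (f1 k)
                  (pow_le_pow_left₀ (abs_nonneg _) (hMle k) _)
                  (by positivity) (by positivity)
            _ = M ^ i2 * (‖X‖ + 1) := mul_comm _ _
            _ ≤ ρ := hi2
        have h2 : ra ^ (i - i2) ≤ rr ^ (i - i2) :=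
          pow_le_pow_left₀ hrapos.le (hmax α hA) _
        calc P * ra ^ i = (P * ra ^ i2) * ra ^ (i - i2) := by rw [hsplit]; ring
          _ ≤ ρ ^ d * rr ^ (i - i2) :=
            mul_le_mul h1 h2 (pow_nonneg hrapos.le _) (pow_nonneg hρ.le _)
      have hcancel : rr ^ (i - i2) * (rr ^ i)⁻¹ = (rr ^ i2)⁻¹ := by
        have hsplit2 : rr ^ i = rr ^ (i - i2) * rr ^ i2 := by
          rw [← pow_add, Nat.sub_add_cancel hii2]
        rw [hsplit2, mul_inv, ← mul_assoc,
          mul_inv_cancel₀ (pow_ne_zero _ hrrpos.ne'), one_mul]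
      calc |A α| * P * (ra / rr) ^ i
          = |A α| * ((P * ra ^ i) * (rr ^ i)⁻¹) := by rw [div_pow]; ring
        _ ≤ |A α| * ((ρ ^ d * rr ^ (i - i2)) * (rr ^ i)⁻¹) := by
            refine mul_le_mul_of_nonneg_left ?_ (abs_nonneg _)
            exact mul_le_mul_of_nonneg_right key (by positivity)
        _ = |A α| * ρ ^ d * (rr ^ (i - i2) * (rr ^ i)⁻¹) := by ring
        _ = bound α := by rw [hcancel, hbound]
  -- dominated convergence
  have hlim : Tendsto (fun i => ∑' α, U i α) atTop (𝓝 (∑' α, L α)) :=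
    tendsto_tsum_of_dominated_convergence hboundsum hpoint hdom
  have htL : ∑' α, L α = A αs * Pc := by
    rw [hL]; exact tsum_ite_eq αs (fun _ => A αs * Pc)
  have hzero' : Tendsto (fun i => ∑' α, U i α) atTop (𝓝 0) :=
    Tendsto.congr' (hU0.mono fun i h => (h.tsum_eq).symm) tendsto_const_nhds
  have hfin : A αs * Pc = 0 := by
    have := tendsto_nhds_unique hlim hzero'
    rwa [htL] at this
  rcases mul_eq_zero.mp hfin with h | h
  · exact hαsS.1 h
  · exact hPcne h

def AuxNonint.mcount {ι : Type*} [DecidableEq ι] {d : ℕ} (φ : Fin d → ι) (s : ι) : ℕ :=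
  (Finset.univ.filter fun i => φ i = s).card

lemma AuxNonint.sum_mcount {ι : Type*} [DecidableEq ι] [Fintype ι] {d : ℕ} (φ : Fin d → ι) :
    ∑ s, AuxNonint.mcount φ s = d := by
  have := Finset.card_eq_sum_card_fiberwise
    (f := φ) (s := Finset.univ) (t := Finset.univ) (fun i _ => Finset.mem_univ _)
  simpa [AuxNonint.mcount] using this.symm

lemma AuxNonint.prod_mcount {ι : Type*} [DecidableEq ι] [Fintype ι] {d : ℕ}
    (φ : Fin d → ι) (v : ι → ℝ) :
    ∏ i, v (φ i) = ∏ s, v s ^ AuxNonint.mcount φ s := by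
  calc ∏ i, v (φ i)
      = ∏ s, ∏ _i ∈ Finset.univ.filter (fun i => φ i = s), v s :=
        (Finset.prod_fiberwise' _ _ _).symm
    _ = ∏ s, v s ^ AuxNonint.mcount φ s :=
        Finset.prod_congr rfl fun s _ => Finset.prod_const _

lemma AuxNonint.finite_fiber {ι : Type*} [Fintype ι] (d : ℕ) :
    Finite {α : ι → ℕ // (∑ s, α s) = d} := by
  refine Finite.of_injective
    (fun x => (fun s => (⟨x.1 s, ?_⟩ : Fin (d + 1)) : ι → Fin (d + 1))) ?_
  · exact Nat.lt_succ_of_le (le_trans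
      (Finset.single_le_sum (fun s _ => Nat.zero_le _) (Finset.mem_univ s)) (le_of_eq x.2))
  · intro x y h
    apply Subtype.ext
    funext s
    simpa using congrArg Fin.val (congrFun h s)

lemma AuxNonint.sum_fiber_eq {ι : Type*} [Fintype ι] [DecidableEq ι] (d : ℕ)
    [Fintype {α : ι → ℕ // (∑ s, α s) = d}] (Q : Finset (ι → ℕ))
    (hQ : ∀ α ∈ Q, ∑ s, α s = d) (f : (ι → ℕ) → ℝ)
    (hf : ∀ α : ι → ℕ, (∑ s, α s = d) → α ∉ Q → f α = 0) :
    ∑ x : {α : ι → ℕ // (∑ s, α s) = d}, f x.1 = ∑ α ∈ Q, f α := by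
  classical
  have hzero' : ∀ x ∈ (Finset.univ : Finset {α : ι → ℕ // (∑ s, α s) = d}),
      f x.1 ≠ 0 → x.1 ∈ Q := fun x _ hx => by
    by_contra hmem
    exact hx (hf x.1 x.2 hmem)
  have h1 := Finset.sum_filter_of_ne (f := fun x : {α : ι → ℕ // (∑ s, α s) = d} => f x.1)
    hzero'
  refine h1.symm.trans ?_
  refine Finset.sum_bij (fun x _ => x.1) ?_ ?_ ?_ ?_
  · intro x hx
    exact (Finset.mem_filter.mp hx).2
  · intro x hx y hy h
    exact Subtype.ext h
  · intro b hb
    exact ⟨⟨b, hQ b hb⟩, Finset.mem_filter.mpr ⟨Finset.mem_univ _, hb⟩, rfl⟩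
  · intro x hx
    rfl

theorem AuxNonint.monomial_expansion {E : Type*} [NormedAddCommGroup E] [NormedSpace ℝ E]
    {ι : Type*} [Fintype ι] [DecidableEq ι] [Nonempty ι]
    (bvec : ι → E) (co : E → ι → ℝ)
    (hco : ∀ z, ∑ s, co z s • bvec s = z)
    (hb : ∀ s, ‖bvec s‖ ≤ 1) (hcoz : ∀ z s, |co z s| ≤ ‖z‖)
    (F : E → ℝ) (p : FormalMultilinearSeries ℝ E ℝ) (R : ℝ≥0∞)
    (hF : HasFPowerSeriesOnBall F p 0 R) :
    ∃ (A : (ι → ℕ) → ℝ) (ρ : ℝ), 0 < ρ ∧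
      Summable (fun α : ι → ℕ => |A α| * ρ ^ (∑ s, α s)) ∧
      ∀ z : E, ‖z‖ ≤ ρ → HasSum (fun α : ι → ℕ => A α * ∏ s, co z s ^ α s) (F z) := by
  classical
  obtain ⟨r, hr0, hrR⟩ : ∃ r : ℝ≥0, 0 < r ∧ (r : ℝ≥0∞) < R := by
    rcases ENNReal.lt_iff_exists_nnreal_btwn.mp hF.r_pos with ⟨r, hr1, hr2⟩
    exact ⟨r, by exact_mod_cast hr1, hr2⟩
  have hr0' : (0 : ℝ) < r := hr0
  set n : ℕ := Fintype.card ι with hn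
  have hn0 : 0 < n := Fintype.card_pos
  set ρ : ℝ := (r : ℝ) / (n + 1) with hρdef
  have hρ0 : 0 < ρ := by positivity
  have hnρ : (n : ℝ) * ρ ≤ r := by
    rw [hρdef]
    calc (n : ℝ) * ((r : ℝ) / (n + 1)) = (r : ℝ) * ((n : ℝ) / (n + 1)) := by ring
      _ ≤ (r : ℝ) * 1 := by
          refine mul_le_mul_of_nonneg_left ?_ (by positivity)
          rw [div_le_one (by positivity)]
          linarith
      _ = r := mul_one _
  have hρr : ρ < r := by
    rw [hρdef, div_lt_iff₀ (by positivity)]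
    have h1 : (1 : ℝ) ≤ n := by exact_mod_cast hn0
    nlinarith
  have hsn : Summable (fun d : ℕ => ‖p d‖ * (r : ℝ) ^ d) :=
    p.summable_norm_mul_pow (lt_of_lt_of_le hrR hF.r_le)
  have hsn2 : Summable (fun d : ℕ => ‖p d‖ * ((n : ℝ) * ρ) ^ d) := by
    refine hsn.of_nonneg_of_le (fun d => by positivity) (fun d => ?_)
    exact mul_le_mul_of_nonneg_left (pow_le_pow_left₀ (by positivity) hnρ _) (norm_nonneg _)
  set A : (ι → ℕ) → ℝ := fun α =>
    ∑ φ ∈ Finset.univ.filter (fun φ : Fin (∑ s, α s) → ι => AuxNonint.mcount φ = α),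
      p (∑ s, α s) (fun i => bvec (φ i)) with hA
  set Qset : ℕ → Finset (ι → ℕ) :=
    fun d => Finset.univ.image (fun φ : Fin d → ι => AuxNonint.mcount φ) with hQ
  have hQmem : ∀ (d : ℕ) (α : ι → ℕ), α ∈ Qset d → ∑ s, α s = d := by
    intro d α hα
    obtain ⟨φ₀, -, hφ₀⟩ := Finset.mem_image.mp hα
    rw [← hφ₀]
    exact AuxNonint.sum_mcount φ₀
  have hpb : ∀ (d : ℕ) (φ : Fin d → ι), |p d (fun i => bvec (φ i))| ≤ ‖p d‖ := by
    intro d φ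
    calc |p d (fun i => bvec (φ i))| = ‖p d (fun i => bvec (φ i))‖ := (Real.norm_eq_abs _).symm
      _ ≤ ‖p d‖ * ∏ i, ‖bvec (φ i)‖ := (p d).le_opNorm _
      _ ≤ ‖p d‖ * 1 := mul_le_mul_of_nonneg_left
          (Finset.prod_le_one (fun i _ => norm_nonneg _) (fun i _ => hb _)) (norm_nonneg _)
      _ = ‖p d‖ := mul_one _
  have hAbound : ∀ (d : ℕ) (α : ι → ℕ), (∑ s, α s = d) →
      |A α| ≤ ∑ φ ∈ Finset.univ.filter (fun φ : Fin d → ι => AuxNonint.mcount φ = α),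
        |p d (fun i => bvec (φ i))| := by
    intro d α h
    subst h
    exact Finset.abs_sum_le_sum_abs _ _
  have hAzero : ∀ (d : ℕ) (α : ι → ℕ), (∑ s, α s = d) → α ∉ Qset d → A α = 0 := by
    intro d α h hnot
    subst h
    refine Finset.sum_eq_zero fun φ hφ => ?_
    exact absurd (Finset.mem_image.mpr ⟨φ, Finset.mem_univ φ, (Finset.mem_filter.mp hφ).2⟩)
      hnot
  have hsumA : ∀ d : ℕ, ∑ α ∈ Qset d, |A α| ≤ (n : ℝ) ^ d * ‖p d‖ := by
    intro d
    have h1 : ∑ α ∈ Qset d, |A α| ≤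
        ∑ α ∈ Qset d, ∑ φ ∈ Finset.univ.filter
          (fun φ : Fin d → ι => AuxNonint.mcount φ = α), |p d (fun i => bvec (φ i))| :=
      Finset.sum_le_sum fun α hα => hAbound d α (hQmem d α hα)
    have h2 : ∑ α ∈ Qset d, ∑ φ ∈ Finset.univ.filter
          (fun φ : Fin d → ι => AuxNonint.mcount φ = α), |p d (fun i => bvec (φ i))|
        = ∑ φ : Fin d → ι, |p d (fun i => bvec (φ i))| :=
      Finset.sum_fiberwise_of_maps_to
        (fun φ _ => Finset.mem_image_of_mem _ (Finset.mem_univ φ)) _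
    have h3 : ∑ φ : Fin d → ι, |p d (fun i => bvec (φ i))| ≤ (n : ℝ) ^ d * ‖p d‖ := by
      calc ∑ φ : Fin d → ι, |p d (fun i => bvec (φ i))|
          ≤ (Finset.univ : Finset (Fin d → ι)).card • ‖p d‖ :=
            Finset.sum_le_card_nsmul _ _ _ (fun φ _ => hpb d φ)
        _ = (n : ℝ) ^ d * ‖p d‖ := by
            rw [Finset.card_univ, Fintype.card_fun, Fintype.card_fin, nsmul_eq_mul]
            push_cast
            ring
    calc ∑ α ∈ Qset d, |A α| ≤ _ := h1
      _ = _ := h2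
      _ ≤ _ := h3
  have hgroup : ∀ (z : E) (d : ℕ),
      ∑ α ∈ Qset d, A α * ∏ s, co z s ^ α s
        = ∑ φ : Fin d → ι, (∏ i, co z (φ i)) * p d (fun i => bvec (φ i)) := by
    intro z d
    rw [← Finset.sum_fiberwise_of_maps_to
      (g := fun φ : Fin d → ι => AuxNonint.mcount φ)
      (fun φ _ => Finset.mem_image_of_mem _ (Finset.mem_univ φ))
      (fun φ => (∏ i, co z (φ i)) * p d (fun i => bvec (φ i)))]
    refine Finset.sum_congr rfl fun α hα => ?_
    have hd : ∑ s, α s = d := hQmem d α hα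
    subst hd
    rw [hA, Finset.sum_mul]
    refine Finset.sum_congr rfl fun φ hφ => ?_
    have hm : AuxNonint.mcount φ = α := (Finset.mem_filter.mp hφ).2
    rw [AuxNonint.prod_mcount φ (co z), hm]
    ring
  have hexp : ∀ (z : E) (d : ℕ),
      (p d fun _ => z) = ∑ φ : Fin d → ι, (∏ i, co z (φ i)) * p d (fun i => bvec (φ i)) := by
    intro z d
    have h1 : (p d fun _ => z) = p d (fun _ => ∑ s, co z s • bvec s) := by rw [hco]
    rw [h1]
    rw [show (p d) (fun _ : Fin d => ∑ s, co z s • bvec s)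
        = (p d).toMultilinearMap (fun _ : Fin d => ∑ s, co z s • bvec s) from rfl]
    rw [MultilinearMap.map_sum]
    refine Finset.sum_congr rfl fun φ _ => ?_
    rw [MultilinearMap.map_smul_univ]
    simp [smul_eq_mul]
  -- the two target statements
  have hmono_le : ∀ (z : E), ‖z‖ ≤ ρ → ∀ α : ι → ℕ,
      |∏ s, co z s ^ α s| ≤ ρ ^ (∑ s, α s) := by
    intro z hz α
    rw [Finset.abs_prod, ← Finset.prod_pow_eq_pow_sum]
    refine Finset.prod_le_prod (fun s _ => abs_nonneg _) (fun s _ => ?_)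
    rw [abs_pow]
    exact pow_le_pow_left₀ (abs_nonneg _) (le_trans (hcoz z s) hz) _
  -- global summability of the coefficient series
  have hBsum : Summable (fun α : ι → ℕ => |A α| * ρ ^ (∑ s, α s)) := by
    have hfinfib : ∀ d : ℕ, Finite {α : ι → ℕ // (∑ s, α s) = d} := fun d =>
      AuxNonint.finite_fiber d
    set esig : (Σ d : ℕ, {α : ι → ℕ // (∑ s, α s) = d}) ≃ (ι → ℕ) :=
      Equiv.sigmaFiberEquiv (fun α : ι → ℕ => ∑ s, α s) with hesig
    rw [← Equiv.summable_iff esig]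
    have hnonneg : ∀ x : Σ d : ℕ, {α : ι → ℕ // (∑ s, α s) = d},
        0 ≤ ((fun α : ι → ℕ => |A α| * ρ ^ (∑ s, α s)) ∘ esig) x := fun x => by
      have : ((fun α : ι → ℕ => |A α| * ρ ^ (∑ s, α s)) ∘ esig) x
          = |A (esig x)| * ρ ^ (∑ s, esig x s) := rfl
      rw [this]
      positivity
    refine (summable_sigma_of_nonneg hnonneg).mpr ⟨?_, ?_⟩
    · intro d
      haveI := hfinfib d
      exact Summable.of_finite
    · refine Summable.of_nonneg_of_le (fun d => tsum_nonneg fun x => hnonneg ⟨d, x⟩)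
        (fun d => ?_) hsn2
      haveI := hfinfib d
      letI := Fintype.ofFinite {α : ι → ℕ // (∑ s, α s) = d}
      rw [tsum_fintype]
      calc ∑ x : {α : ι → ℕ // (∑ s, α s) = d},
            ((fun α : ι → ℕ => |A α| * ρ ^ (∑ s, α s)) ∘ esig) ⟨d, x⟩
          = ∑ x : {α : ι → ℕ // (∑ s, α s) = d}, |A x.1| * ρ ^ (∑ s, x.1 s) :=
            Finset.sum_congr rfl fun x _ => rfl
        _ = ∑ α ∈ Qset d, |A α| * ρ ^ (∑ s, α s) :=
            AuxNonint.sum_fiber_eq d (Qset d) (hQmem d)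
              (fun α => |A α| * ρ ^ (∑ s, α s))
              (fun α hα hn' => by show |A α| * ρ ^ (∑ s, α s) = 0
                                  rw [hAzero d α hα hn', abs_zero, zero_mul])
        _ = (∑ α ∈ Qset d, |A α|) * ρ ^ d := by
            rw [Finset.sum_mul]
            refine Finset.sum_congr rfl fun α hα => by rw [hQmem d α hα]
        _ ≤ ((n : ℝ) ^ d * ‖p d‖) * ρ ^ d :=
            mul_le_mul_of_nonneg_right (hsumA d) (by positivity)
        _ = ‖p d‖ * ((n : ℝ) * ρ) ^ d := by rw [mul_pow]; ring
  refine ⟨A, ρ, hρ0, hBsum, ?_⟩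
  intro z hz
  have hznorm : z ∈ Metric.eball (0 : E) R := by
    rw [mem_emetric_ball_zero_iff]
    have h1 : ‖z‖₊ < r := by
      rw [← NNReal.coe_lt_coe]
      calc (‖z‖₊ : ℝ) = ‖z‖ := coe_nnnorm z
        _ ≤ ρ := hz
        _ < r := hρr
    exact lt_trans (ENNReal.coe_lt_coe.mpr h1) hrR
  have hsz : HasSum (fun d => p d fun _ => z) (F z) := by
    have := hF.hasSum hznorm
    simpa using this
  have hfib : ∀ d : ℕ, HasSum
      (fun x : {α : ι → ℕ // (∑ s, α s) = d} => A x.1 * ∏ s, co z s ^ x.1 s)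
      (p d fun _ => z) := by
    intro d
    haveI := AuxNonint.finite_fiber (ι := ι) d
    letI := Fintype.ofFinite {α : ι → ℕ // (∑ s, α s) = d}
    have h1 := hasSum_fintype
      (fun x : {α : ι → ℕ // (∑ s, α s) = d} => A x.1 * ∏ s, co z s ^ x.1 s)
    have h2 : ∑ x : {α : ι → ℕ // (∑ s, α s) = d}, A x.1 * ∏ s, co z s ^ x.1 s
        = p d fun _ => z := by
      calc ∑ x : {α : ι → ℕ // (∑ s, α s) = d}, A x.1 * ∏ s, co z s ^ x.1 s
          = ∑ α ∈ Qset d, A α * ∏ s, co z s ^ α s :=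
            AuxNonint.sum_fiber_eq d (Qset d) (hQmem d)
              (fun α => A α * ∏ s, co z s ^ α s)
              (fun α hα hn' => by show A α * ∏ s, co z s ^ α s = 0
                                  rw [hAzero d α hα hn', zero_mul])
        _ = p d fun _ => z := by rw [hgroup z d, ← hexp z d]
    rwa [h2] at h1
  have hGle : ∀ α : ι → ℕ, ‖A α * ∏ s, co z s ^ α s‖ ≤ |A α| * ρ ^ (∑ s, α s) := by
    intro α
    rw [Real.norm_eq_abs, abs_mul]
    exact mul_le_mul_of_nonneg_left (hmono_le z hz α) (abs_nonneg _)
  set esig : (Σ d : ℕ, {α : ι → ℕ // (∑ s, α s) = d}) ≃ (ι → ℕ) :=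
    Equiv.sigmaFiberEquiv (fun α : ι → ℕ => ∑ s, α s) with hesig
  have hsummG : Summable ((fun α : ι → ℕ => A α * ∏ s, co z s ^ α s) ∘ esig) := by
    refine Summable.of_norm_bounded ((Equiv.summable_iff esig).mpr hBsum) ?_
    intro x
    exact hGle (esig x)
  have hmain : HasSum ((fun α : ι → ℕ => A α * ∏ s, co z s ^ α s) ∘ esig) (F z) := by
    refine HasSum.sigma_of_hasSum hsz (fun d => ?_) hsummG
    exact hfib d
  exact (Equiv.hasSum_iff esig).mp hmain

lemma AuxNonint.summable_update {β : Type*} [DecidableEq β] {f : β → ℝ} (hf : Summable f)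
    (b : β) (x : ℝ) : Summable (Function.update f b x) := by
  have h : Function.update f b x = fun a => f a + (if a = b then x - f b else 0) := by
    funext a
    by_cases hab : a = b
    · subst hab
      simp
    · simp [Function.update_of_ne hab, hab]
  rw [h]
  refine hf.add (summable_of_ne_finset_zero (s := {b}) ?_)
  intro a ha
  simp only [Finset.mem_singleton] at ha
  simp [ha]

/-- Let `f` be an analytic diffeomorphism of `E = ℝ^{n⁻} × ℝ^{n⁺}` (with
analytic inverse `g`) fixing the origin, with
`f(x,y) = (λ⁻ ⊙ x + r⁻(x,y), λ⁺ ⊙ y + r⁺(x,y))` on `U = B⁻ × B⁺`, where `r = (r⁻, r⁺)` is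
analytic with `r(0) = 0`, `Dr(0) = 0`, `0 < |λ⁻ₖ| < 1`, `|λ⁺ⱼ| > 1`, and `λ⁻` satisfies the
multiplicative non-resonance condition.  For `z` whose iterates up to time `i` stay in `U`
write `f^[i](x,y) = ((λ⁻)^i ⊙ x + r₋ᵢ(x,y), (λ⁺)^i ⊙ y + r₊ᵢ(x,y))`, so
`r₋ᵢ(x,y) = (f^[i](x,y)).1 - (λ⁻)^i ⊙ x`.  Let `x⁻ ∈ B⁻`, let `δ ∈ (0,1)^{n⁺}` be
multiplicatively non-resonant, and let `C` be admissible.  Assume that for every sufficiently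
large `n`, with `Y₊ = δ^n ⊙ C`, there are points `(xᵢ, yᵢ) ∈ W⁺(0) ∩ U` (for all large `i`)
whose iterates up to time `i` stay in `U`, with `(f^[i](xᵢ,yᵢ)).2 = Y₊`, `xᵢ → x⁻`, and
`(λ⁻)^{-i} ⊙ r₋ᵢ(xᵢ,yᵢ) → l₊(Y₊)` with `x⁻ + l₊(Y₊)` admissible.  Then every analytic first
integral `I` of `f` is constant on a neighbourhood of `0`. -/
theorem analytic_nonintegrability_remainder_condition
    (nm np : ℕ) (hnm : 1 ≤ nm) (hnp : 1 ≤ np)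
    (f g : (Fin nm → ℝ) × (Fin np → ℝ) → (Fin nm → ℝ) × (Fin np → ℝ))
    (hf : AnalyticOnNhd ℝ f Set.univ) (hg : AnalyticOnNhd ℝ g Set.univ)
    (hgf : Function.LeftInverse g f) (hfg : Function.RightInverse g f)
    (hf0 : f 0 = 0)
    (lm : Fin nm → ℝ) (lp : Fin np → ℝ)
    (hlm : ∀ k, 0 < |lm k| ∧ |lm k| < 1) (hlp : ∀ j, 1 < |lp j|)
    (hres : ∀ ν : Fin nm → ℤ, ν ≠ 0 → |∏ k, lm k ^ ν k| ≠ 1)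
    -- form of `f` on `U = B⁻ × B⁺`, with analytic remainder `r`, `r(0) = 0`, `Dr(0) = 0`
    (a b : ℝ) (ha : 0 < a) (hb : 0 < b)
    (r : (Fin nm → ℝ) × (Fin np → ℝ) → (Fin nm → ℝ) × (Fin np → ℝ))
    (hr : AnalyticOnNhd ℝ r
      (Metric.ball (0 : Fin nm → ℝ) a ×ˢ Metric.ball (0 : Fin np → ℝ) b))
    (hr0 : r 0 = 0) (hDr : fderiv ℝ r 0 = 0)
    (hfU : ∀ z : (Fin nm → ℝ) × (Fin np → ℝ),
      z ∈ Metric.ball (0 : Fin nm → ℝ) a ×ˢ Metric.ball (0 : Fin np → ℝ) b →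
      f z = (fun k => lm k * z.1 k + (r z).1 k, fun j => lp j * z.2 j + (r z).2 j))
    -- data: `x⁻ ∈ B⁻`, non-resonant `δ ∈ (0,1)^{n⁺}`, admissible `C`
    (xm : Fin nm → ℝ) (hxm : xm ∈ Metric.ball (0 : Fin nm → ℝ) a)
    (δ : Fin np → ℝ) (hδ : ∀ j, 0 < δ j ∧ δ j < 1)
    (hδres : ∀ ν : Fin np → ℤ, ν ≠ 0 → |∏ j, δ j ^ ν j| ≠ 1)
    (C : Fin np → ℝ) (hC : ∀ j, C j ≠ 0)
    -- the remainder condition along the planes `P_{C₊}` with `Y₊ = δ^n ⊙ C`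
    (hmain : ∀ᶠ n in (atTop : Filter ℕ),
      ∃ (x : ℕ → Fin nm → ℝ) (y : ℕ → Fin np → ℝ) (l : Fin nm → ℝ),
        (∀ᶠ i in (atTop : Filter ℕ),
          Tendsto (fun m => g^[m] (x i, y i)) atTop
            (𝓝 (0 : (Fin nm → ℝ) × (Fin np → ℝ))) ∧
          (∀ j ≤ i, f^[j] (x i, y i) ∈
            Metric.ball (0 : Fin nm → ℝ) a ×ˢ Metric.ball (0 : Fin np → ℝ) b) ∧
          (f^[i] (x i, y i)).2 = fun j => δ j ^ n * C j) ∧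
        Tendsto x atTop (𝓝 xm) ∧
        Tendsto (fun i : ℕ => fun k =>
            (lm k : ℝ) ^ (-(i : ℤ)) * ((f^[i] (x i, y i)).1 k - lm k ^ i * x i k))
          atTop (𝓝 l) ∧
        (∀ k, xm k + l k ≠ 0))
    -- analytic first integral
    (I : (Fin nm → ℝ) × (Fin np → ℝ) → ℝ)
    (hI : AnalyticOnNhd ℝ I Set.univ) (hIf : I ∘ f = I) :
    ∀ᶠ z in 𝓝 (0 : (Fin nm → ℝ) × (Fin np → ℝ)), I z = I 0 := by
  classical
  haveI : Nonempty (Fin nm) := ⟨⟨0, hnm⟩⟩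
  haveI : Nonempty (Fin np) := ⟨⟨0, hnp⟩⟩
  -- invariance of I along orbits
  have hIg : ∀ u, I (g u) = I u := by
    intro u
    have h1 : I (f (g u)) = I (g u) := congrFun hIf (g u)
    rw [hfg u] at h1
    exact h1.symm
  have hIgiter : ∀ m u, I (g^[m] u) = I u := by
    intro m
    induction m with
    | zero => intro u; rfl
    | succ m ih =>
        intro u
        rw [Function.iterate_succ_apply', hIg, ih u]
  have hIfiter : ∀ m u, I (f^[m] u) = I u := by
    intro m
    induction m with
    | zero => intro u; rfl
    | succ m ih =>
        intro u
        have h1 : I (f (f^[m] u)) = I (f^[m] u) := congrFun hIf (f^[m] u)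
        rw [Function.iterate_succ_apply', h1, ih u]
  have hIcont : Continuous I := by
    rw [← continuousOn_univ]
    exact hI.continuousOn
  have hWplus : ∀ u : (Fin nm → ℝ) × (Fin np → ℝ),
      Tendsto (fun m => g^[m] u) atTop (𝓝 0) → I u = I 0 := by
    intro u hu
    have h1 : Tendsto (fun m => I (g^[m] u)) atTop (𝓝 (I 0)) := (hIcont.tendsto 0).comp hu
    have h2 : (fun m => I (g^[m] u)) = fun _ => I u := funext fun m => hIgiter m u
    rw [h2] at h1
    exact tendsto_nhds_unique tendsto_const_nhds h1
  -- coordinates on the product space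
  set bvec : (Fin nm ⊕ Fin np) → (Fin nm → ℝ) × (Fin np → ℝ) :=
    Sum.elim (fun k => (Pi.single k 1, 0)) (fun j => (0, Pi.single j 1)) with hbvec
  set co : ((Fin nm → ℝ) × (Fin np → ℝ)) → (Fin nm ⊕ Fin np) → ℝ :=
    fun z => Sum.elim (fun k => z.1 k) (fun j => z.2 j) with hcodef
  have hco : ∀ z : (Fin nm → ℝ) × (Fin np → ℝ), ∑ s, co z s • bvec s = z := by
    intro z
    rw [Fintype.sum_sum_type]
    have h1 : ∀ k : Fin nm, co z (Sum.inl k) • bvec (Sum.inl k)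
        = ((Pi.single k (z.1 k) : Fin nm → ℝ), (0 : Fin np → ℝ)) := by
      intro k
      show z.1 k • ((Pi.single k 1 : Fin nm → ℝ), (0 : Fin np → ℝ)) = _
      rw [Prod.smul_mk, smul_zero]
      congr 1
      rw [← Pi.single_smul, smul_eq_mul, mul_one]
    have h2 : ∀ j : Fin np, co z (Sum.inr j) • bvec (Sum.inr j)
        = ((0 : Fin nm → ℝ), (Pi.single j (z.2 j) : Fin np → ℝ)) := by
      intro j
      show z.2 j • ((0 : Fin nm → ℝ), (Pi.single j 1 : Fin np → ℝ)) = _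
      rw [Prod.smul_mk, smul_zero]
      congr 1
      rw [← Pi.single_smul, smul_eq_mul, mul_one]
    rw [Finset.sum_congr rfl (fun k _ => h1 k), Finset.sum_congr rfl (fun j _ => h2 j)]
    refine Prod.ext ?_ ?_
    · rw [Prod.fst_add, Prod.fst_sum, Prod.fst_sum]
      simp [Finset.univ_sum_single]
    · rw [Prod.snd_add, Prod.snd_sum, Prod.snd_sum]
      simp [Finset.univ_sum_single]
  have hbnorm : ∀ s, ‖bvec s‖ ≤ 1 := by
    intro s
    cases s with
    | inl k =>
        show ‖((Pi.single k 1 : Fin nm → ℝ), (0 : Fin np → ℝ))‖ ≤ 1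
        rw [Prod.norm_def]
        simp [Pi.norm_single]
    | inr j =>
        show ‖((0 : Fin nm → ℝ), (Pi.single j 1 : Fin np → ℝ))‖ ≤ 1
        rw [Prod.norm_def]
        simp [Pi.norm_single]
  have hcoz : ∀ (z : (Fin nm → ℝ) × (Fin np → ℝ)) s, |co z s| ≤ ‖z‖ := by
    intro z s
    cases s with
    | inl k =>
        show |z.1 k| ≤ ‖z‖
        calc |z.1 k| = ‖z.1 k‖ := (Real.norm_eq_abs _).symm
          _ ≤ ‖z.1‖ := norm_le_pi_norm z.1 k
          _ ≤ ‖z‖ := norm_fst_le z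
    | inr j =>
        show |z.2 j| ≤ ‖z‖
        calc |z.2 j| = ‖z.2 j‖ := (Real.norm_eq_abs _).symm
          _ ≤ ‖z.2‖ := norm_le_pi_norm z.2 j
          _ ≤ ‖z‖ := norm_snd_le z
  -- power series of I at 0 and its monomial expansion
  obtain ⟨p, R, hp⟩ : ∃ p R, HasFPowerSeriesOnBall I p 0 R := by
    rcases hI 0 (Set.mem_univ 0) with ⟨p, hp⟩
    rcases hp with ⟨R, hR⟩
    exact ⟨p, R, hR⟩
  obtain ⟨A, ρ, hρ0, hAsum, hAhas⟩ :=
    AuxNonint.monomial_expansion bvec co hco hbnorm hcoz I p R hp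
  -- shifted coefficients
  set A' : ((Fin nm ⊕ Fin np) → ℕ) → ℝ := Function.update A 0 (A 0 - I 0) with hA'
  have hA'sum : Summable (fun α : (Fin nm ⊕ Fin np) → ℕ => |A' α| * ρ ^ (∑ s, α s)) := by
    have heq : (fun α : (Fin nm ⊕ Fin np) → ℕ => |A' α| * ρ ^ (∑ s, α s))
        = Function.update (fun α : (Fin nm ⊕ Fin np) → ℕ => |A α| * ρ ^ (∑ s, α s)) 0
            (|A' 0| * ρ ^ (∑ s, (0 : (Fin nm ⊕ Fin np) → ℕ) s)) := by
      funext α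
      by_cases h : α = 0
      · subst h
        rw [Function.update_self]
      · rw [Function.update_of_ne h, hA', Function.update_of_ne h]
    rw [heq]
    exact AuxNonint.summable_update hAsum _ _
  have hA'has : ∀ z : (Fin nm → ℝ) × (Fin np → ℝ), ‖z‖ ≤ ρ →
      HasSum (fun α : (Fin nm ⊕ Fin np) → ℕ => A' α * ∏ s, co z s ^ α s) (I z - I 0) := by
    intro z hz
    have hmono0 : ∏ s, co z s ^ (0 : (Fin nm ⊕ Fin np) → ℕ) s = 1 := by simp
    have h0 := (hAhas z hz).update 0 (A 0 - I 0)
    have hfun : Function.update (fun α : (Fin nm ⊕ Fin np) → ℕ => A α * ∏ s, co z s ^ α s) 0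
        (A 0 - I 0) = fun α => A' α * ∏ s, co z s ^ α s := by
      funext α
      by_cases h : α = 0
      · subst h
        rw [Function.update_self, hA', Function.update_self, hmono0, mul_one]
      · rw [Function.update_of_ne h, hA', Function.update_of_ne h]
    rw [hfun] at h0
    have hval : (A 0 - I 0) - (fun α : (Fin nm ⊕ Fin np) → ℕ => A α * ∏ s, co z s ^ α s) 0
        + I z = I z - I 0 := by
      show (A 0 - I 0) - A 0 * ∏ s, co z s ^ (0 : (Fin nm ⊕ Fin np) → ℕ) s + I z = I z - I 0
      rw [hmono0]
      ring
    rwa [hval] at h0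
  -- transport to product-indexed coefficients
  set e : ((Fin nm ⊕ Fin np) → ℕ) ≃ ((Fin nm → ℕ) × (Fin np → ℕ)) :=
    Equiv.sumArrowEquivProdArrow _ _ ℕ with he
  have hesymm : ∀ (ν : Fin nm → ℕ) (μ : Fin np → ℕ), e.symm (ν, μ) = Sum.elim ν μ :=
    fun ν μ => rfl
  set Ahat : (Fin nm → ℕ) × (Fin np → ℕ) → ℝ := fun pq => A' (e.symm pq) with hAhat
  have hdegsplit : ∀ (ν : Fin nm → ℕ) (μ : Fin np → ℕ),
      ∑ s, (Sum.elim ν μ) s = (∑ k, ν k) + (∑ j, μ j) := by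
    intro ν μ
    rw [Fintype.sum_sum_type]
    simp
  have hmonosplit : ∀ (z : (Fin nm → ℝ) × (Fin np → ℝ)) (ν : Fin nm → ℕ) (μ : Fin np → ℕ),
      ∏ s, co z s ^ (Sum.elim ν μ) s = (∏ k, z.1 k ^ ν k) * (∏ j, z.2 j ^ μ j) := by
    intro z ν μ
    rw [Fintype.prod_sum_type]
    simp [hcodef]
  have hSfull : Summable (fun pq : (Fin nm → ℕ) × (Fin np → ℕ) =>
      |Ahat pq| * ρ ^ ((∑ k, pq.1 k) + (∑ j, pq.2 j))) := by
    have h1 : Summable ((fun α : (Fin nm ⊕ Fin np) → ℕ => |A' α| * ρ ^ (∑ s, α s)) ∘ e.symm) :=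
      (Equiv.summable_iff e.symm).mpr hA'sum
    refine h1.congr fun pq => ?_
    obtain ⟨ν, μ⟩ := pq
    show |A' (e.symm (ν, μ))| * ρ ^ (∑ s, (e.symm (ν, μ)) s) = _
    rw [hesymm, hdegsplit]
    rfl
  have hb1 : ∀ ν : Fin nm → ℕ,
      Summable (fun μ : Fin np → ℕ => |Ahat (ν, μ)| * ρ ^ (∑ j, μ j)) := by
    intro ν
    refine ((hSfull.prod_factor ν).mul_right ((ρ ^ (∑ k, ν k))⁻¹)).congr fun μ => ?_
    show |Ahat (ν, μ)| * ρ ^ ((∑ k, ν k) + (∑ j, μ j)) * (ρ ^ (∑ k, ν k))⁻¹ = _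
    rw [pow_add]
    have hne : (ρ : ℝ) ^ (∑ k, ν k) ≠ 0 := pow_ne_zero _ hρ0.ne'
    field_simp
  -- smallness of the planes Y₊ = δ^n ⊙ C
  have hYsmall : Tendsto (fun n : ℕ => (fun j => δ j ^ n * C j : Fin np → ℝ)) atTop (𝓝 0) := by
    rw [tendsto_pi_nhds]
    intro j
    have h1 : Tendsto (fun n : ℕ => δ j ^ n) atTop (𝓝 0) :=
      tendsto_pow_atTop_nhds_zero_of_lt_one (hδ j).1.le (hδ j).2
    simpa using h1.mul_const (C j)
  have hYnorm : ∀ᶠ n in (atTop : Filter ℕ), ‖(fun j => δ j ^ n * C j : Fin np → ℝ)‖ ≤ ρ := by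
    have h1 : Tendsto (fun n : ℕ => ‖(fun j => δ j ^ n * C j : Fin np → ℝ)‖) atTop (𝓝 0) := by
      simpa using hYsmall.norm
    exact h1.eventually (eventually_le_nhds hρ0)
  -- stage 1
  have hstage1 : ∀ᶠ n in (atTop : Filter ℕ), ∀ ν : Fin nm → ℕ,
      HasSum (fun μ : Fin np → ℕ => Ahat (ν, μ) * ∏ j, (δ j ^ n * C j) ^ μ j) 0 := by
    filter_upwards [hmain, hYnorm] with n hn hYn
    obtain ⟨x, y, l, hev, hx, hrem, hadm⟩ := hn
    set w : Fin np → ℝ := fun j => δ j ^ n * C j with hw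
    set W : ℕ → Fin nm → ℝ := fun i k =>
      x i k + (lm k : ℝ) ^ (-(i : ℤ)) * ((f^[i] (x i, y i)).1 k - lm k ^ i * x i k) with hWdef
    have hlmne : ∀ k, lm k ≠ 0 := fun k => abs_pos.mp (hlm k).1
    have hWtend : Tendsto W atTop (𝓝 (fun k => xm k + l k)) := hx.add hrem
    have hfirst : ∀ (i : ℕ) (k : Fin nm), (f^[i] (x i, y i)).1 k = lm k ^ i * W i k := by
      intro i k
      have hzp : (lm k : ℝ) ^ i * (lm k) ^ (-(i : ℤ)) = 1 := by
        rw [← zpow_natCast (lm k) i, ← zpow_add₀ (hlmne k)]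
        simp
      show _ = lm k ^ i * (x i k + lm k ^ (-(i : ℤ)) * ((f^[i] (x i, y i)).1 k - lm k ^ i * x i k))
      calc (f^[i] (x i, y i)).1 k
          = lm k ^ i * x i k
            + (lm k ^ i * lm k ^ (-(i : ℤ))) * ((f^[i] (x i, y i)).1 k - lm k ^ i * x i k) := by
            rw [hzp]
            ring
        _ = lm k ^ i * (x i k + lm k ^ (-(i : ℤ)) * ((f^[i] (x i, y i)).1 k - lm k ^ i * x i k)) := by
            ring
    have hIzero : ∀ᶠ i in (atTop : Filter ℕ), I (f^[i] (x i, y i)) - I 0 = 0 := by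
      filter_upwards [hev] with i hi
      rw [hIfiter i (x i, y i), hWplus _ hi.1, sub_self]
    have hz1tend : Tendsto (fun i => (f^[i] (x i, y i)).1) atTop (𝓝 0) := by
      have h1 : Tendsto (fun i => (fun k => lm k ^ i * W i k : Fin nm → ℝ)) atTop (𝓝 0) := by
        rw [tendsto_pi_nhds]
        intro k
        have hk1 : Tendsto (fun i : ℕ => lm k ^ i) atTop (𝓝 0) := by
          apply tendsto_pow_atTop_nhds_zero_of_norm_lt_one
          rw [Real.norm_eq_abs]
          exact (hlm k).2
        have hk2 : Tendsto (fun i => W i k) atTop (𝓝 (xm k + l k)) :=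
          tendsto_pi_nhds.mp hWtend k
        simpa using hk1.mul hk2
      refine Tendsto.congr (fun i => ?_) h1
      exact (funext fun k => (hfirst i k)).symm
    have hznorm : ∀ᶠ i in (atTop : Filter ℕ), ‖f^[i] (x i, y i)‖ ≤ ρ := by
      have h2 : ∀ᶠ i in (atTop : Filter ℕ), ‖(f^[i] (x i, y i)).1‖ ≤ ρ := by
        have h3 : Tendsto (fun i => ‖(f^[i] (x i, y i)).1‖) atTop (𝓝 0) := by
          simpa using hz1tend.norm
        exact h3.eventually (eventually_le_nhds hρ0)
      filter_upwards [h2, hev] with i h2i hi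
      rw [Prod.norm_def]
      refine max_le h2i ?_
      rw [hi.2.2]
      exact hYn
    have hfull : ∀ᶠ i in (atTop : Filter ℕ),
        HasSum (fun pq : (Fin nm → ℕ) × (Fin np → ℕ) =>
          Ahat pq * ((∏ k, (f^[i] (x i, y i)).1 k ^ pq.1 k) * (∏ j, w j ^ pq.2 j))) 0 := by
      filter_upwards [hznorm, hIzero, hev] with i hzi hIi hi
      have h0 := hA'has _ hzi
      rw [hIi] at h0
      have h1 : HasSum ((fun α : (Fin nm ⊕ Fin np) → ℕ =>
          A' α * ∏ s, co (f^[i] (x i, y i)) s ^ α s) ∘ e.symm) 0 :=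
        (Equiv.hasSum_iff e.symm).mpr h0
      have heqf : ((fun α : (Fin nm ⊕ Fin np) → ℕ =>
            A' α * ∏ s, co (f^[i] (x i, y i)) s ^ α s) ∘ e.symm)
          = fun pq : (Fin nm → ℕ) × (Fin np → ℕ) =>
              Ahat pq * ((∏ k, (f^[i] (x i, y i)).1 k ^ pq.1 k) * (∏ j, w j ^ pq.2 j)) := by
        funext pq
        obtain ⟨ν, μ⟩ := pq
        show A' (e.symm (ν, μ)) * ∏ s, co (f^[i] (x i, y i)) s ^ (e.symm (ν, μ)) s = _
        rw [hesymm, hmonosplit]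
        have hsnd : ∏ j, (f^[i] (x i, y i)).2 j ^ μ j = ∏ j, w j ^ μ j := by
          rw [hi.2.2]
        rw [hsnd]
        rfl
      rwa [heqf] at h1
    have hwle : ∀ j, |w j| ≤ ρ := by
      intro j
      calc |w j| = ‖w j‖ := (Real.norm_eq_abs _).symm
        _ ≤ ‖w‖ := norm_le_pi_norm w j
        _ ≤ ρ := hYn
    have hmono_w : ∀ μ : Fin np → ℕ, |∏ j, w j ^ μ j| ≤ ρ ^ (∑ j, μ j) := by
      intro μ
      rw [Finset.abs_prod, ← Finset.prod_pow_eq_pow_sum]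
      refine Finset.prod_le_prod (fun _ _ => abs_nonneg _) (fun j _ => ?_)
      rw [abs_pow]
      exact pow_le_pow_left₀ (abs_nonneg _) (hwle j) _
    have hinner : ∀ ν : Fin nm → ℕ,
        Summable (fun μ : Fin np → ℕ => Ahat (ν, μ) * ∏ j, w j ^ μ j) := by
      intro ν
      refine Summable.of_norm_bounded (hb1 ν) ?_
      intro μ
      rw [Real.norm_eq_abs, abs_mul]
      exact mul_le_mul_of_nonneg_left (hmono_w μ) (abs_nonneg _)
    set B : (Fin nm → ℕ) → ℝ := fun ν => ∑' μ, Ahat (ν, μ) * ∏ j, w j ^ μ j with hB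
    have hBhas : ∀ᶠ i in (atTop : Filter ℕ),
        HasSum (fun ν : Fin nm → ℕ => B ν * ∏ k, (lm k ^ i * W i k) ^ ν k) 0 := by
      filter_upwards [hfull] with i hfi
      refine HasSum.prod_fiberwise hfi ?_
      intro ν
      have h1 : HasSum (fun μ => Ahat (ν, μ) * ∏ j, w j ^ μ j) (B ν) := (hinner ν).hasSum
      have h2 := h1.mul_right (∏ k, (f^[i] (x i, y i)).1 k ^ ν k)
      have heqf : (fun μ : Fin np → ℕ =>
            (Ahat (ν, μ) * ∏ j, w j ^ μ j) * ∏ k, (f^[i] (x i, y i)).1 k ^ ν k)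
          = fun μ : Fin np → ℕ =>
              Ahat (ν, μ) * ((∏ k, (f^[i] (x i, y i)).1 k ^ ν k) * ∏ j, w j ^ μ j) := by
        funext μ
        ring
      rw [heqf] at h2
      have hval : B ν * ∏ k, (f^[i] (x i, y i)).1 k ^ ν k
          = B ν * ∏ k, (lm k ^ i * W i k) ^ ν k := by
        congr 1
        exact Finset.prod_congr rfl fun k _ => by rw [hfirst i k]
      rwa [hval] at h2
    have hG : Summable (fun ν : Fin nm → ℕ =>
        ∑' μ, |Ahat (ν, μ)| * ρ ^ ((∑ k, ν k) + (∑ j, μ j))) :=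
      (HasSum.prod_fiberwise hSfull.hasSum
        (fun ν => (hSfull.prod_factor ν).hasSum)).summable
    have hBsum1 : Summable (fun ν : Fin nm → ℕ => |B ν| * ρ ^ (∑ k, ν k)) := by
      refine Summable.of_nonneg_of_le (fun ν => by positivity) (fun ν => ?_) hG
      have hn2 : Summable (fun μ : Fin np → ℕ => |Ahat (ν, μ) * ∏ j, w j ^ μ j|) := by
        refine Summable.of_nonneg_of_le (fun μ => abs_nonneg _) (fun μ => ?_) (hb1 ν)
        rw [abs_mul]
        exact mul_le_mul_of_nonneg_left (hmono_w μ) (abs_nonneg _)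
      have h1 : |B ν| ≤ ∑' μ, |Ahat (ν, μ)| * ρ ^ (∑ j, μ j) := by
        rw [hB]
        have hn2' : Summable (fun μ : Fin np → ℕ => ‖Ahat (ν, μ) * ∏ j, w j ^ μ j‖) := by
          simpa only [Real.norm_eq_abs] using hn2
        have hstep := norm_tsum_le_tsum_norm hn2'
        simp only [Real.norm_eq_abs] at hstep
        calc |∑' μ, Ahat (ν, μ) * ∏ j, w j ^ μ j|
            ≤ ∑' μ, |Ahat (ν, μ) * ∏ j, w j ^ μ j| := hstep
          _ ≤ ∑' μ, |Ahat (ν, μ)| * ρ ^ (∑ j, μ j) := by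
              refine Summable.tsum_le_tsum (fun μ => ?_) hn2 (hb1 ν)
              rw [abs_mul]
              exact mul_le_mul_of_nonneg_left (hmono_w μ) (abs_nonneg _)
      calc |B ν| * ρ ^ (∑ k, ν k)
          ≤ (∑' μ, |Ahat (ν, μ)| * ρ ^ (∑ j, μ j)) * ρ ^ (∑ k, ν k) :=
            mul_le_mul_of_nonneg_right h1 (by positivity)
        _ = ∑' μ, |Ahat (ν, μ)| * ρ ^ ((∑ k, ν k) + (∑ j, μ j)) := by
            rw [← tsum_mul_right]
            refine tsum_congr fun μ => ?_
            rw [pow_add]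
            ring
    have hBzero : ∀ ν, B ν = 0 :=
      AuxNonint.core_vanish lm hlm hres B W (fun k => xm k + l k) hWtend hadm ρ hρ0
        hBsum1 hBhas
    intro ν
    have h1 : HasSum (fun μ => Ahat (ν, μ) * ∏ j, w j ^ μ j) (B ν) := (hinner ν).hasSum
    rwa [hBzero ν] at h1
  -- stage 2
  have hδ' : ∀ j, 0 < |δ j| ∧ |δ j| < 1 := by
    intro j
    rw [abs_of_pos (hδ j).1]
    exact hδ j
  have hAhatzero : ∀ pq : (Fin nm → ℕ) × (Fin np → ℕ), Ahat pq = 0 := by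
    intro pq
    obtain ⟨ν, μ⟩ := pq
    refine AuxNonint.core_vanish δ hδ' hδres (fun μ' => Ahat (ν, μ')) (fun _ => C) C
      tendsto_const_nhds hC ρ hρ0 (hb1 ν) ?_ μ
    filter_upwards [hstage1] with n hn
    exact hn ν
  have hA'zero : ∀ α : (Fin nm ⊕ Fin np) → ℕ, A' α = 0 := by
    intro α
    have h1 : A' (e.symm (e α)) = 0 := hAhatzero (e α)
    rwa [Equiv.symm_apply_apply] at h1
  -- conclusion
  have hfinal : ∀ z : (Fin nm → ℝ) × (Fin np → ℝ), ‖z‖ ≤ ρ → I z = I 0 := by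
    intro z hz
    have h0 := hA'has z hz
    have h1 : (fun α : (Fin nm ⊕ Fin np) → ℕ => A' α * ∏ s, co z s ^ α s)
        = fun _ => (0 : ℝ) := by
      funext α
      rw [hA'zero α, zero_mul]
    rw [h1] at h0
    have h2 := h0.unique hasSum_zero
    linarith
  filter_upwards [Metric.closedBall_mem_nhds (0 : (Fin nm → ℝ) × (Fin np → ℝ)) hρ0] with z hz
  exact hfinal z (by rwa [Metric.mem_closedBall, dist_zero_right] at hz)
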